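/- arXiv:2303.16753 — 2 statements merged into one kernel-verified Lean document; each statement's English description precedes it below -/
import Mathlib

section
/- Let g : ℝ → ℝ be g(θ) = (1+θ)/√(1+θ²). Fix an integer N ≥ 1, a real x, parameters u, v, u*, v* : Fin N → ℝ all taking values in [0,1], and shared central scalars c, c* ∈ [0,1]. Define F(u,v,c) = (∏_{l=1}^N g(u_l·c·v_l))·x. Then |F(u*,v*,c*) − F(u,v,c)| ≤ (√2)^(N−1) · |x| · Σ_{l=1}^N ( c*·v*_l·|u*_l − u_l| + u_l·v*_l·|c* − c| + u_l·c·|v*_l − v_l| ). -/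
noncomputable def g (θ : ℝ) : ℝ := (1 + θ) / Real.sqrt (1 + θ ^ 2)

noncomputable def gd (θ : ℝ) : ℝ := (1 - θ) / (Real.sqrt (1 + θ ^ 2)) ^ 3

lemma sqrt_pos' (θ : ℝ) : 0 < Real.sqrt (1 + θ ^ 2) := by
  apply Real.sqrt_pos.2; positivity

lemma sqrt_sq' (θ : ℝ) : (Real.sqrt (1 + θ ^ 2)) ^ 2 = 1 + θ ^ 2 :=
  Real.sq_sqrt (by positivity)

lemma sqrt_one_le (θ : ℝ) : 1 ≤ Real.sqrt (1 + θ ^ 2) := by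
  have h := Real.sqrt_le_sqrt (show (1:ℝ) ≤ 1 + θ ^ 2 by nlinarith [sq_nonneg θ])
  simpa using h

lemma g_deriv (θ : ℝ) : HasDerivAt g (gd θ) θ := by
  have hs := sqrt_pos' θ
  have h1 : HasDerivAt (fun t : ℝ => 1 + t ^ 2) (2 * θ) θ := by
    simpa using ((hasDerivAt_pow 2 θ).const_add 1)
  have h2 : HasDerivAt (fun t : ℝ => Real.sqrt (1 + t ^ 2))
      (1 / (2 * Real.sqrt (1 + θ ^ 2)) * (2 * θ)) θ :=
    (Real.hasDerivAt_sqrt (by positivity)).comp θ h1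
  have h3 : HasDerivAt (fun t : ℝ => 1 + t) 1 θ := by
    simpa using (hasDerivAt_id θ).const_add 1
  have h4 : HasDerivAt g _ θ := h3.div h2 (ne_of_gt hs)
  convert h4 using 1
  have hsq := sqrt_sq' θ
  have hs3 : (Real.sqrt (1 + θ ^ 2)) ^ 3 = Real.sqrt (1 + θ ^ 2) * (1 + θ ^ 2) := by
    rw [pow_succ, pow_succ, pow_one]; nlinarith [hsq]
  rw [gd, hs3, hsq]
  field_simp
  linear_combination (-1) * hsq

lemma gd_bound {θ : ℝ} (hθ : θ ∈ Set.Icc (0:ℝ) 1) : |gd θ| ≤ 1 := by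
  have hs := sqrt_pos' θ
  have h1 := sqrt_one_le θ
  obtain ⟨h0, hle⟩ := hθ
  rw [gd, abs_div, abs_of_nonneg (by linarith), abs_of_nonneg (by positivity)]
  rw [div_le_one (by positivity)]
  have h2 : (1:ℝ) ≤ (Real.sqrt (1 + θ ^ 2)) ^ 3 := by
    have := pow_le_pow_left₀ (zero_le_one) h1 3
    simpa using this
  linarith

lemma g_lipschitz {a b : ℝ} (ha : a ∈ Set.Icc (0:ℝ) 1) (hb : b ∈ Set.Icc (0:ℝ) 1) :
    |g a - g b| ≤ |a - b| := by
  have := (convex_Icc (0:ℝ) 1).norm_image_sub_le_of_norm_hasDerivWithin_le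
    (f := g) (f' := gd) (C := 1) (s := Set.Icc 0 1)
    (fun t ht => (g_deriv t).hasDerivWithinAt)
    (fun t ht => by simpa using gd_bound ht) hb ha
  simpa using this

lemma g_mem {θ : ℝ} (hθ : θ ∈ Set.Icc (0:ℝ) 1) : g θ ∈ Set.Icc (0:ℝ) (Real.sqrt 2) := by
  obtain ⟨h0, h1⟩ := hθ
  have hs := sqrt_pos' θ
  have hsq := sqrt_sq' θ
  constructor
  · exact div_nonneg (by linarith) hs.le
  · rw [g, div_le_iff₀ hs]
    have h2 : Real.sqrt 2 * Real.sqrt (1 + θ ^ 2) = Real.sqrt (2 * (1 + θ ^ 2)) :=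
      (Real.sqrt_mul (by norm_num) _).symm
    rw [h2]
    have : (1 + θ : ℝ) = Real.sqrt ((1 + θ) ^ 2) := by
      rw [Real.sqrt_sq (by linarith)]
    rw [this]
    exact Real.sqrt_le_sqrt (by nlinarith [sq_nonneg (1 - θ)])

lemma prod_sub_prod_bound {ι : Type*} [DecidableEq ι] (t : Finset ι)
    (f h : ι → ℝ) (M : ℝ) (hM : 1 ≤ M)
    (hf : ∀ i ∈ t, f i ∈ Set.Icc (0:ℝ) M) (hh : ∀ i ∈ t, h i ∈ Set.Icc (0:ℝ) M) :
    |∏ i ∈ t, f i - ∏ i ∈ t, h i| ≤ M ^ (t.card - 1) * ∑ i ∈ t, |f i - h i| := by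
  induction t using Finset.induction_on with
  | empty => simp
  | @insert a t' ha ih =>
    have hfa := hf a (Finset.mem_insert_self a t')
    have hha := hh a (Finset.mem_insert_self a t')
    have hf' : ∀ i ∈ t', f i ∈ Set.Icc (0:ℝ) M := fun i hi => hf i (Finset.mem_insert_of_mem hi)
    have hh' : ∀ i ∈ t', h i ∈ Set.Icc (0:ℝ) M := fun i hi => hh i (Finset.mem_insert_of_mem hi)
    have IH := ih hf' hh'
    rw [Finset.prod_insert ha, Finset.prod_insert ha, Finset.sum_insert ha,
      Finset.card_insert_of_notMem ha, Nat.add_sub_cancel]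
    have hpf : ∏ i ∈ t', f i ≤ M ^ t'.card := by
      calc ∏ i ∈ t', f i ≤ ∏ _i ∈ t', M :=
            Finset.prod_le_prod (fun i hi => (hf' i hi).1) (fun i hi => (hf' i hi).2)
        _ = M ^ t'.card := Finset.prod_const M
    have hpf0 : 0 ≤ ∏ i ∈ t', f i := Finset.prod_nonneg fun i hi => (hf' i hi).1
    have hsum0 : 0 ≤ ∑ i ∈ t', |f i - h i| := Finset.sum_nonneg fun i _ => abs_nonneg _
    have key : f a * ∏ i ∈ t', f i - h a * ∏ i ∈ t', h i
        = (f a - h a) * ∏ i ∈ t', f i + h a * (∏ i ∈ t', f i - ∏ i ∈ t', h i) := by ring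
    calc |f a * ∏ i ∈ t', f i - h a * ∏ i ∈ t', h i|
        ≤ |f a - h a| * |∏ i ∈ t', f i| + |h a| * |∏ i ∈ t', f i - ∏ i ∈ t', h i| := by
          rw [key]; exact (abs_add_le _ _).trans (by rw [abs_mul, abs_mul])
      _ ≤ |f a - h a| * M ^ t'.card + M * (M ^ (t'.card - 1) * ∑ i ∈ t', |f i - h i|) := by
          gcongr
          · rw [abs_of_nonneg hpf0]; exact hpf
          · rw [abs_of_nonneg hha.1]; exact hha.2
      _ ≤ M ^ t'.card * (|f a - h a| + ∑ i ∈ t', |f i - h i|) := by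
          rcases Nat.eq_zero_or_pos t'.card with h0 | hpos
          · have : t' = ∅ := Finset.card_eq_zero.1 h0
            subst this; simp
          · have : M * M ^ (t'.card - 1) = M ^ t'.card := by
              rw [← pow_succ']
              congr 1
              omega
            have e : M * (M ^ (t'.card - 1) * ∑ i ∈ t', |f i - h i|)
                = M ^ t'.card * ∑ i ∈ t', |f i - h i| := by rw [← mul_assoc, this]
            rw [e, mul_add, mul_comm (M ^ t'.card) |f a - h a|]

theorem mpo_update_bound (N : ℕ) (hN : 1 ≤ N) (x : ℝ)
    (u v u' v' : Fin N → ℝ) (c c' : ℝ)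
    (hu : ∀ l, u l ∈ Set.Icc (0 : ℝ) 1) (hv : ∀ l, v l ∈ Set.Icc (0 : ℝ) 1)
    (hu' : ∀ l, u' l ∈ Set.Icc (0 : ℝ) 1) (hv' : ∀ l, v' l ∈ Set.Icc (0 : ℝ) 1)
    (hc : c ∈ Set.Icc (0 : ℝ) 1) (hc' : c' ∈ Set.Icc (0 : ℝ) 1) :
    |(∏ l, g (u' l * c' * v' l)) * x - (∏ l, g (u l * c * v l)) * x| ≤
      Real.sqrt 2 ^ (N - 1) * |x| *
        ∑ l, (c' * v' l * |u' l - u l| + u l * v' l * |c' - c| + u l * c * |v' l - v l|) := by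
  have hM : (1:ℝ) ≤ Real.sqrt 2 := by
    rw [show (1:ℝ) = Real.sqrt 1 by simp]
    exact Real.sqrt_le_sqrt (by norm_num)
  have hmem : ∀ (a b e : ℝ), a ∈ Set.Icc (0:ℝ) 1 → b ∈ Set.Icc (0:ℝ) 1 →
      e ∈ Set.Icc (0:ℝ) 1 → a * b * e ∈ Set.Icc (0:ℝ) 1 := by
    intro a b e ⟨ha0, ha1⟩ ⟨hb0, hb1⟩ ⟨he0, he1⟩
    constructor
    · positivity
    · calc a * b * e ≤ 1 * 1 * 1 := by gcongr
        _ = 1 := by norm_num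
  have step1 := prod_sub_prod_bound Finset.univ
    (fun l => g (u' l * c' * v' l)) (fun l => g (u l * c * v l)) (Real.sqrt 2) hM
    (fun l _ => g_mem (hmem _ _ _ (hu' l) hc' (hv' l)))
    (fun l _ => g_mem (hmem _ _ _ (hu l) hc (hv l)))
  rw [Finset.card_univ, Fintype.card_fin] at step1
  have step2 : ∑ l, |g (u' l * c' * v' l) - g (u l * c * v l)| ≤
      ∑ l, (c' * v' l * |u' l - u l| + u l * v' l * |c' - c| + u l * c * |v' l - v l|) := by
    apply Finset.sum_le_sum
    intro l _
    have hlip := g_lipschitz (hmem _ _ _ (hu' l) hc' (hv' l)) (hmem _ _ _ (hu l) hc (hv l))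
    refine hlip.trans ?_
    have key : u' l * c' * v' l - u l * c * v l
        = (u' l - u l) * (c' * v' l) + (c' - c) * (u l * v' l) + (v' l - v l) * (u l * c) := by
      ring
    rw [key]
    have h1 : 0 ≤ c' * v' l := mul_nonneg hc'.1 (hv' l).1
    have h2 : 0 ≤ u l * v' l := mul_nonneg (hu l).1 (hv' l).1
    have h3 : 0 ≤ u l * c := mul_nonneg (hu l).1 hc.1
    calc |(u' l - u l) * (c' * v' l) + (c' - c) * (u l * v' l) + (v' l - v l) * (u l * c)|
        ≤ |(u' l - u l) * (c' * v' l)| + |(c' - c) * (u l * v' l)| + |(v' l - v l) * (u l * c)| :=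
          abs_add_three _ _ _
      _ = c' * v' l * |u' l - u l| + u l * v' l * |c' - c| + u l * c * |v' l - v l| := by
          have e1 : |(u' l - u l) * (c' * v' l)| = c' * v' l * |u' l - u l| := by
            rw [abs_mul, abs_of_nonneg h1]; ring
          have e2 : |(c' - c) * (u l * v' l)| = u l * v' l * |c' - c| := by
            rw [abs_mul, abs_of_nonneg h2]; ring
          have e3 : |(v' l - v l) * (u l * c)| = u l * c * |v' l - v l| := by
            rw [abs_mul, abs_of_nonneg h3]; ring
          rw [e1, e2, e3]
  have hMpow : (0:ℝ) ≤ Real.sqrt 2 ^ (N - 1) := pow_nonneg (by positivity) _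
  calc |(∏ l, g (u' l * c' * v' l)) * x - (∏ l, g (u l * c * v l)) * x|
      = |(∏ l, g (u' l * c' * v' l)) - (∏ l, g (u l * c * v l))| * |x| := by
        rw [← sub_mul, abs_mul]
    _ ≤ (Real.sqrt 2 ^ (N - 1) * ∑ l, |g (u' l * c' * v' l) - g (u l * c * v l)|) * |x| := by
        gcongr
        all_goals try exact step1
    _ ≤ (Real.sqrt 2 ^ (N - 1) *
          ∑ l, (c' * v' l * |u' l - u l| + u l * v' l * |c' - c| + u l * c * |v' l - v l|)) * |x| := by
        gcongr
    _ = Real.sqrt 2 ^ (N - 1) * |x| *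
          ∑ l, (c' * v' l * |u' l - u l| + u l * v' l * |c' - c| + u l * c * |v' l - v l|) := by
        ring
end

section
/- Let g : ℝ → ℝ be g(θ) = (1+θ)/√(1+θ²), N ≥ 1 an integer, i ∈ Fin N, x ∈ ℝ, and u, v : Fin N → ℝ with values in [0,1], c ∈ [0,1]. Define h(t) = g(t·c·v_i) · (∏_{l≠i} g(u_l·c·v_l)) · x. Then |h′(u_i)| ≤ (√2)^(N−1) · c · v_i · |x|. -/
lemma hasDerivAt_g (θ : ℝ) :
    HasDerivAt g ((1 - θ) / Real.sqrt (1 + θ ^ 2) ^ 3) θ := by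
  have h1 : (0:ℝ) < 1 + θ ^ 2 := by positivity
  have hs0 : 0 < Real.sqrt (1 + θ ^ 2) := Real.sqrt_pos.mpr h1
  have hs2 : Real.sqrt (1 + θ ^ 2) ^ 2 = 1 + θ ^ 2 := Real.sq_sqrt h1.le
  have hd : HasDerivAt (fun θ : ℝ => Real.sqrt (1 + θ ^ 2))
      ((2 * θ) / (2 * Real.sqrt (1 + θ ^ 2))) θ := by
    have h : HasDerivAt (fun θ : ℝ => 1 + θ ^ 2) (2 * θ) θ := by
      simpa using (hasDerivAt_pow 2 θ).const_add 1
    exact h.sqrt h1.ne'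
  have hn : HasDerivAt (fun θ : ℝ => 1 + θ) 1 θ := by
    simpa using (hasDerivAt_id θ).const_add 1
  have := hn.div hd hs0.ne'
  refine HasDerivAt.congr_deriv (f := g) this ?_
  symm
  set s := Real.sqrt (1 + θ ^ 2)
  field_simp
  linear_combination (-1) * hs2

lemma g_nonneg {θ : ℝ} (h0 : 0 ≤ θ) : 0 ≤ g θ := by
  unfold g
  positivity

lemma g_le_sqrt_two {θ : ℝ} (h0 : 0 ≤ θ) : g θ ≤ Real.sqrt 2 := by
  have h1 : (0:ℝ) < 1 + θ ^ 2 := by positivity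
  have hs0 : 0 < Real.sqrt (1 + θ ^ 2) := Real.sqrt_pos.mpr h1
  unfold g
  rw [div_le_iff₀ hs0]
  have : Real.sqrt 2 * Real.sqrt (1 + θ ^ 2) = Real.sqrt (2 * (1 + θ ^ 2)) := by
    rw [Real.sqrt_mul (by norm_num)]
  rw [this]
  rw [show (1 + θ) = Real.sqrt ((1 + θ) ^ 2) by rw [Real.sqrt_sq (by linarith)]]
  apply Real.sqrt_le_sqrt
  nlinarith [sq_nonneg (1 - θ)]

theorem deriv_auxiliary_bound (N : ℕ) (hN : 1 ≤ N) (i : Fin N) (x : ℝ)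
    (u v : Fin N → ℝ)
    (hu : ∀ l, u l ∈ Set.Icc (0 : ℝ) 1) (hv : ∀ l, v l ∈ Set.Icc (0 : ℝ) 1)
    (c : ℝ) (hc : c ∈ Set.Icc (0 : ℝ) 1) :
    |deriv (fun t : ℝ =>
        g (t * c * v i) * (∏ l ∈ Finset.univ.erase i, g (u l * c * v l)) * x) (u i)| ≤
      Real.sqrt 2 ^ (N - 1) * c * v i * |x| := by
  obtain ⟨hc0, hc1⟩ := hc
  obtain ⟨hv0, hv1⟩ := hv i
  obtain ⟨hu0, hu1⟩ := hu i
  set K : ℝ := ∏ l ∈ Finset.univ.erase i, g (u l * c * v l) with hK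
  set a : ℝ := c * v i with ha
  have ha0 : 0 ≤ a := mul_nonneg hc0 hv0
  set θ : ℝ := u i * a with hθ
  have hθ0 : 0 ≤ θ := mul_nonneg hu0 ha0
  have hθ1 : θ ≤ 1 := by
    rw [hθ, ha]; nlinarith
  -- derivative computation
  have hlin : HasDerivAt (fun t : ℝ => t * a) a (u i) := by
    simpa using (hasDerivAt_id (u i)).mul_const a
  have hcomp : HasDerivAt (fun t : ℝ => g (t * a))
      ((1 - θ) / Real.sqrt (1 + θ ^ 2) ^ 3 * a) (u i) :=
    by have := (hasDerivAt_g θ).comp (u i) hlin; exact this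
  have hfull : HasDerivAt (fun t : ℝ => g (t * c * v i) * K * x)
      ((1 - θ) / Real.sqrt (1 + θ ^ 2) ^ 3 * a * K * x) (u i) := by
    have := (hcomp.mul_const K).mul_const x
    rw [show (fun t : ℝ => g (t * c * v i) * K * x) = fun t => g (t * a) * K * x from
      funext fun t => by simp [mul_assoc, ha]]
    exact this
  rw [hfull.deriv]
  -- bounds
  have hgd : |(1 - θ) / Real.sqrt (1 + θ ^ 2) ^ 3| ≤ 1 := by
    have hs1 : (1:ℝ) ≤ Real.sqrt (1 + θ ^ 2) := by
      nlinarith [Real.sq_sqrt (show (0:ℝ) ≤ 1 + θ ^ 2 by positivity),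
        Real.sqrt_nonneg (1 + θ ^ 2)]
    have hs3 : (1:ℝ) ≤ Real.sqrt (1 + θ ^ 2) ^ 3 := one_le_pow₀ hs1
    rw [abs_div, abs_of_nonneg (by linarith : (0:ℝ) ≤ 1 - θ),
        abs_of_nonneg (by linarith : (0:ℝ) ≤ Real.sqrt (1 + θ ^ 2) ^ 3)]
    rw [div_le_one (by linarith)]
    linarith
  have hKnn : 0 ≤ K := by
    apply Finset.prod_nonneg
    intro l _
    exact g_nonneg (mul_nonneg (mul_nonneg (hu l).1 hc0) (hv l).1)
  have hKle : K ≤ Real.sqrt 2 ^ (N - 1) := by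
    have hcard : (Finset.univ.erase i).card = N - 1 := by
      rw [Finset.card_erase_of_mem (Finset.mem_univ i)]
      simp
    calc K ≤ ∏ _l ∈ Finset.univ.erase i, Real.sqrt 2 := by
            apply Finset.prod_le_prod
            · intro l _
              exact g_nonneg (mul_nonneg (mul_nonneg (hu l).1 hc0) (hv l).1)
            · intro l _
              exact g_le_sqrt_two (mul_nonneg (mul_nonneg (hu l).1 hc0) (hv l).1)
      _ = Real.sqrt 2 ^ (N - 1) := by rw [Finset.prod_const, hcard]
  have hsqrt2 : (0:ℝ) ≤ Real.sqrt 2 ^ (N - 1) := by positivity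
  rw [abs_mul, abs_mul, abs_mul, abs_of_nonneg ha0, abs_of_nonneg hKnn]
  calc |(1 - θ) / Real.sqrt (1 + θ ^ 2) ^ 3| * a * K * |x|
      ≤ 1 * a * Real.sqrt 2 ^ (N - 1) * |x| := by
        apply mul_le_mul_of_nonneg_right _ (abs_nonneg x)
        apply mul_le_mul (mul_le_mul_of_nonneg_right hgd ha0) hKle hKnn
        positivity
    _ = Real.sqrt 2 ^ (N - 1) * c * v i * |x| := by rw [ha]; ring
end
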